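/- Let A ∈ ℂ^{n×n}, let G_1, …, G_{n−1} be Givens rotations (G_i acting on rows i and i+1 with s_i ≠ 0 for all i), set Q = G_1 G_2 ⋯ G_{n−1}, let D ∈ ℝ^{n×n} be a real diagonal matrix, and set R = t(QAQ^*) − Q (D + t(A)) Q^*. Then for every i with 3 ≤ i ≤ n, the i-th row of R G_1 G_2 ⋯ G_{i−2} has its first i−2 entries equal to zero: (R G_1 G_2 ⋯ G_{i−2})_{i,j} = 0 for all j = 1, …, i−2. Equivalently, e_i^T R = [0,…,0, v_i, d_i, w_i^*] G_{i−2}^* G_{i−3}^* ⋯ G_1^* for some v_i, d_i ∈ ℂ and w_i ∈ ℂ^{n−i}. -/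

import Mathlib

open Matrix BigOperators Finset

/-- The operator `t`: `t(A)_{ij} = A_{ij}` for `i > j`, `conj (A_{ji})` for
`i < j`, and `0` on the diagonal. -/
noncomputable def tOp {n : ℕ} (A : Matrix (Fin n) (Fin n) ℂ) :
    Matrix (Fin n) (Fin n) ℂ :=
  Matrix.of fun i j =>
    if j < i then A i j else if i < j then (starRingEnd ℂ) (A j i) else 0

/-- `G` is the Givens rotation acting on (0-indexed) rows `i` and `i+1` with
parameters `c ∈ ℝ`, `s ∈ ℂ`, `c² + |s|² = 1`. -/
def IsGivensAt {n : ℕ} (i : ℕ) (c : ℝ) (s : ℂ) (G : Matrix (Fin n) (Fin n) ℂ) : Prop :=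
  i + 1 < n ∧ c ^ 2 + ‖s‖ ^ 2 = 1 ∧
  ∀ p q : Fin n,
    G p q =
      if (p : ℕ) = i ∧ (q : ℕ) = i then (c : ℂ)
      else if (p : ℕ) = i ∧ (q : ℕ) = i + 1 then s
      else if (p : ℕ) = i + 1 ∧ (q : ℕ) = i then -((starRingEnd ℂ) s)
      else if (p : ℕ) = i + 1 ∧ (q : ℕ) = i + 1 then (c : ℂ)
      else if p = q then 1 else 0

/-- The ordered product `G 0 * G 1 * ⋯ * G (m-1)` (`m` factors). -/
noncomputable def rotProdFrom0 {n : ℕ} (G : ℕ → Matrix (Fin n) (Fin n) ℂ) (m : ℕ) :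
    Matrix (Fin n) (Fin n) ℂ :=
  ((List.range m).map G).prod

lemma rotProd_zero {n : ℕ} (G : ℕ → Matrix (Fin n) (Fin n) ℂ) :
    rotProdFrom0 G 0 = 1 := by simp [rotProdFrom0]

lemma rotProd_succ {n : ℕ} (G : ℕ → Matrix (Fin n) (Fin n) ℂ) (m : ℕ) :
    rotProdFrom0 G (m+1) = rotProdFrom0 G m * G m := by
  simp [rotProdFrom0, List.range_succ]

lemma givens_row {n i : ℕ} {c : ℝ} {s : ℂ} {M : Matrix (Fin n) (Fin n) ℂ}
    (h : IsGivensAt i c s M) {k : Fin n} (h1 : (k:ℕ) ≠ i) (h2 : (k:ℕ) ≠ i+1)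
    (t : Fin n) : M k t = if k = t then 1 else 0 := by
  rw [h.2.2 k t]; simp [h1, h2]

lemma givens_col {n i : ℕ} {c : ℝ} {s : ℂ} {M : Matrix (Fin n) (Fin n) ℂ}
    (h : IsGivensAt i c s M) {j : Fin n} (h1 : (j:ℕ) ≠ i) (h2 : (j:ℕ) ≠ i+1)
    (t : Fin n) : M t j = if t = j then 1 else 0 := by
  rw [h.2.2 t j]; simp [h1, h2]

lemma givens_col_i {n i : ℕ} {c : ℝ} {s : ℂ} {M : Matrix (Fin n) (Fin n) ℂ}
    (h : IsGivensAt i c s M) {j : Fin n} (hj : (j:ℕ) = i) (t : Fin n) :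
    M t j = if (t:ℕ) = i then (c:ℂ) else if (t:ℕ) = i+1 then -((starRingEnd ℂ) s) else 0 := by
  rw [h.2.2 t j]
  have hji : ¬ (j:ℕ) = i + 1 := by omega
  by_cases h1 : (t:ℕ) = i
  · simp [h1, hj, hji]
  · by_cases h2 : (t:ℕ) = i+1
    · simp [h1, h2, hj, hji]
    · have ht : t ≠ j := fun he => h1 (by rw [he, hj])
      simp [h1, h2, hj, hji, ht]

lemma givens_col_i1 {n i : ℕ} {c : ℝ} {s : ℂ} {M : Matrix (Fin n) (Fin n) ℂ}
    (h : IsGivensAt i c s M) {j : Fin n} (hj : (j:ℕ) = i+1) (t : Fin n) :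
    M t j = if (t:ℕ) = i then s else if (t:ℕ) = i+1 then (c:ℂ) else 0 := by
  rw [h.2.2 t j]
  have hji : ¬ (j:ℕ) = i := by omega
  by_cases h1 : (t:ℕ) = i
  · simp [h1, hj, hji]
  · by_cases h2 : (t:ℕ) = i+1
    · simp [h1, h2, hj, hji]
    · have ht : t ≠ j := fun he => h2 (by rw [he, hj])
      simp [h1, h2, hj, hji, ht]

section
variable {n : ℕ} {c : ℕ → ℝ} {s : ℕ → ℂ} {G : ℕ → Matrix (Fin n) (Fin n) ℂ}
variable (hG : ∀ i, i + 1 < n → IsGivensAt i (c i) (s i) (G i))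

include hG

/-- rows `k > m` of `P_m` are standard basis rows -/
lemma rotProd_row_id : ∀ m, m < n → ∀ k j : Fin n, m < (k:ℕ) →
    rotProdFrom0 G m k j = if k = j then 1 else 0 := by
  intro m
  induction m with
  | zero => intro _ k j _; rw [rotProd_zero]; exact Matrix.one_apply
  | succ m ih =>
    intro hm k j hk
    rw [rotProd_succ, Matrix.mul_apply]
    have hGm := hG m hm
    have hrow : ∀ t, rotProdFrom0 G m k t = if k = t then 1 else 0 :=
      fun t => ih (by omega) k t (by omega)
    calc ∑ t, rotProdFrom0 G m k t * G m t j
        = ∑ t, (if k = t then 1 else 0) * G m t j := by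
          refine Finset.sum_congr rfl fun t _ => by rw [hrow t]
      _ = G m k j := by simp [ite_mul]
      _ = if k = j then 1 else 0 := givens_row hGm (by omega) (by omega) j

/-- `P_m` is upper Hessenberg -/
lemma rotProd_hess : ∀ m, m < n → ∀ k j : Fin n, (j:ℕ) + 1 < (k:ℕ) →
    rotProdFrom0 G m k j = 0 := by
  intro m
  induction m with
  | zero =>
    intro _ k j hkj
    rw [rotProd_zero, Matrix.one_apply_ne (fun he => by omega)]
  | succ m ih =>
    intro hm k j hkj
    rw [rotProd_succ, Matrix.mul_apply]
    have hGm := hG m hm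
    refine Finset.sum_eq_zero fun t _ => ?_
    by_cases h1 : (t:ℕ) = m
    · -- G m t j may be nonzero only when j ∈ {m-1? no: col j nonzero at row m only if j ∈ {m, m+1}}
      by_cases hj : (j:ℕ) = m ∨ (j:ℕ) = m + 1
      · -- then k > j+1 ≥ m+1 > m = t, so P_m k t = 0 by hess (t < k - 1) or row id
        have : rotProdFrom0 G m k t = 0 := by
          have := rotProd_row_id hG m (by omega) k t (by omega)
          rw [this, if_neg]; exact fun he => by omega
        rw [this, zero_mul]
      · push_neg at hj
        rw [givens_col hGm hj.1 hj.2, if_neg (fun he => hj.1 (by rw [← he, h1]))]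
        ring
    · by_cases h2 : (t:ℕ) = m + 1
      · by_cases hj : (j:ℕ) = m ∨ (j:ℕ) = m + 1
        · have : rotProdFrom0 G m k t = 0 := by
            have := rotProd_row_id hG m (by omega) k t (by omega)
            rw [this, if_neg]; exact fun he => by omega
          rw [this, zero_mul]
        · push_neg at hj
          rw [givens_col hGm hj.1 hj.2, if_neg (fun he => hj.2 (by rw [← he, h2]))]
          ring
      · rw [givens_row hGm h1 h2, ]
        by_cases htj : t = j
        · subst htj; rw [ih (by omega) k t hkj, zero_mul]
        · rw [if_neg htj, mul_zero]

/-- columns `j < m₁` of `P_{m₂}` agree with those of `P_{m₁}` -/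
lemma rotProd_col_agree : ∀ m₁ m₂, m₁ ≤ m₂ → m₂ ≤ n - 1 → ∀ j : Fin n, (j:ℕ) < m₁ →
    ∀ k, rotProdFrom0 G m₂ k j = rotProdFrom0 G m₁ k j := by
  intro m₁ m₂
  induction m₂ with
  | zero => intro h _ j _ k; interval_cases m₁; rfl
  | succ m ih =>
    intro h hm j hj k
    rcases Nat.eq_or_lt_of_le h with he | hlt
    · rw [he]
    · have hmn : m + 1 < n := by
        have : 0 < n := j.pos
        omega
      have hGm := hG m hmn
      rw [rotProd_succ, Matrix.mul_apply]
      have hj1 : (j:ℕ) ≠ m := by omega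
      have hj2 : (j:ℕ) ≠ m + 1 := by omega
      calc ∑ t, rotProdFrom0 G m k t * G m t j
          = ∑ t, rotProdFrom0 G m k t * (if t = j then 1 else 0) := by
            refine Finset.sum_congr rfl fun t _ => by rw [givens_col hGm hj1 hj2 t]
        _ = rotProdFrom0 G m k j := by simp
        _ = rotProdFrom0 G m₁ k j := ih (by omega) (by omega) j hj k


/-- a Givens rotation is unitary -/
lemma givens_unitary {i : ℕ} (hi : i + 1 < n) : (G i)ᴴ * G i = 1 := by
  have h := hG i hi
  obtain ⟨_, hcs, hf⟩ := h
  have hpos : 0 < n := by omega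
  set fi : Fin n := ⟨i, by omega⟩ with hfi
  set fi1 : Fin n := ⟨i+1, by omega⟩ with hfi1
  have hne : fi ≠ fi1 := fun he => by
    have := congrArg Fin.val he; simp [hfi, hfi1] at this
  have pair_sum : ∀ (f : Fin n → ℂ), (∀ t, t ≠ fi → t ≠ fi1 → f t = 0) →
      ∑ t, f t = f fi + f fi1 := by
    intro f hf0
    rw [← Finset.sum_subset (Finset.subset_univ ({fi, fi1} : Finset (Fin n)))]
    · rw [Finset.sum_pair hne]
    · intro x _ hx
      simp only [Finset.mem_insert, Finset.mem_singleton, not_or] at hx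
      exact hf0 x hx.1 hx.2
  have habs : (c i : ℂ)^2 + s i * (starRingEnd ℂ) (s i) = 1 := by
    rw [Complex.mul_conj, ← Complex.sq_norm]
    exact_mod_cast hcs
  ext p q
  rw [Matrix.mul_apply]
  simp only [Matrix.conjTranspose_apply]
  by_cases hq1 : (q:ℕ) = i
  · have hcol := givens_col_i ⟨hi, hcs, hf⟩ hq1
    have hsum : ∑ t, star (G i t p) * G i t q =
        star (G i fi p) * G i fi q + star (G i fi1 p) * G i fi1 q :=
      pair_sum _ (fun t ht1 ht2 => by
        show star (G i t p) * G i t q = 0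
        rw [hcol t, if_neg, if_neg]
        · ring
        · exact fun he => ht2 (Fin.ext he)
        · exact fun he => ht1 (Fin.ext he))
    rw [hsum]
    have e1 : G i fi q = (c i : ℂ) := by rw [hcol]; simp [hfi]
    have e2 : G i fi1 q = -((starRingEnd ℂ) (s i)) := by
      rw [hcol]; simp [hfi1]
    rw [e1, e2]
    by_cases hp1 : (p:ℕ) = i
    · have f1 : G i fi p = (c i : ℂ) := by rw [givens_col_i ⟨hi, hcs, hf⟩ hp1]; simp [hfi]
      have f2 : G i fi1 p = -((starRingEnd ℂ) (s i)) := by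
        rw [givens_col_i ⟨hi, hcs, hf⟩ hp1]; simp [hfi1]
      have hpq : p = q := Fin.ext (by omega)
      rw [f1, f2, hpq, Matrix.one_apply_eq]
      simp only [star_neg, RCLike.star_def, Complex.conj_conj, Complex.conj_ofReal]
      ring_nf
      ring_nf at habs
      linear_combination habs
    · by_cases hp2 : (p:ℕ) = i + 1
      · have f1 : G i fi p = s i := by rw [givens_col_i1 ⟨hi, hcs, hf⟩ hp2]; simp [hfi]
        have f2 : G i fi1 p = (c i : ℂ) := by rw [givens_col_i1 ⟨hi, hcs, hf⟩ hp2]; simp [hfi1]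
        have hpq : p ≠ q := fun he => by rw [he] at hp2; omega
        rw [f1, f2, Matrix.one_apply_ne hpq]
        simp only [RCLike.star_def, Complex.conj_ofReal]
        ring
      · have f1 : G i fi p = 0 := by
          rw [givens_col ⟨hi, hcs, hf⟩ hp1 hp2 fi,
            if_neg (fun he : fi = p => hp1 ((congrArg Fin.val he).symm))]
        have f2 : G i fi1 p = 0 := by
          rw [givens_col ⟨hi, hcs, hf⟩ hp1 hp2 fi1,
            if_neg (fun he : fi1 = p => hp2 ((congrArg Fin.val he).symm))]
        have hpq : p ≠ q := fun he => hp1 (by rw [he, hq1])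
        rw [f1, f2, Matrix.one_apply_ne hpq]
        simp
  · by_cases hq2 : (q:ℕ) = i + 1
    · have hcol := givens_col_i1 ⟨hi, hcs, hf⟩ hq2
      have hsum : ∑ t, star (G i t p) * G i t q =
          star (G i fi p) * G i fi q + star (G i fi1 p) * G i fi1 q :=
        pair_sum _ (fun t ht1 ht2 => by
          show star (G i t p) * G i t q = 0
          rw [hcol t, if_neg, if_neg]
          · ring
          · exact fun he => ht2 (Fin.ext he)
          · exact fun he => ht1 (Fin.ext he))
      rw [hsum]
      have e1 : G i fi q = s i := by rw [hcol]; simp [hfi]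
      have e2 : G i fi1 q = (c i : ℂ) := by rw [hcol]; simp [hfi1]
      rw [e1, e2]
      by_cases hp1 : (p:ℕ) = i
      · have f1 : G i fi p = (c i : ℂ) := by rw [givens_col_i ⟨hi, hcs, hf⟩ hp1]; simp [hfi]
        have f2 : G i fi1 p = -((starRingEnd ℂ) (s i)) := by
          rw [givens_col_i ⟨hi, hcs, hf⟩ hp1]; simp [hfi1]
        have hpq : p ≠ q := fun he => by rw [he] at hp1; omega
        rw [f1, f2, Matrix.one_apply_ne hpq]
        simp only [star_neg, RCLike.star_def, Complex.conj_conj, Complex.conj_ofReal]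
        ring
      · by_cases hp2 : (p:ℕ) = i + 1
        · have f1 : G i fi p = s i := by rw [givens_col_i1 ⟨hi, hcs, hf⟩ hp2]; simp [hfi]
          have f2 : G i fi1 p = (c i : ℂ) := by rw [givens_col_i1 ⟨hi, hcs, hf⟩ hp2]; simp [hfi1]
          have hpq : p = q := Fin.ext (by omega)
          rw [f1, f2, hpq, Matrix.one_apply_eq]
          simp only [RCLike.star_def, Complex.conj_ofReal]
          linear_combination habs
        · have f1 : G i fi p = 0 := by
            rw [givens_col ⟨hi, hcs, hf⟩ hp1 hp2 fi,
              if_neg (fun he : fi = p => hp1 ((congrArg Fin.val he).symm))]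
          have f2 : G i fi1 p = 0 := by
            rw [givens_col ⟨hi, hcs, hf⟩ hp1 hp2 fi1,
              if_neg (fun he : fi1 = p => hp2 ((congrArg Fin.val he).symm))]
          have hpq : p ≠ q := fun he => hp2 (by rw [he, hq2])
          rw [f1, f2, Matrix.one_apply_ne hpq]
          simp
    · have hcol := givens_col ⟨hi, hcs, hf⟩ hq1 hq2
      calc ∑ t, star (G i t p) * G i t q
          = ∑ t, (if t = q then star (G i t p) else 0) := by
            refine Finset.sum_congr rfl fun t _ => by rw [hcol t]; split <;> simp
        _ = star (G i q p) := by rw [Finset.sum_ite_eq']; simp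
        _ = (1 : Matrix (Fin n) (Fin n) ℂ) p q := by
            rw [givens_row ⟨hi, hcs, hf⟩ hq1 hq2 p]
            by_cases hpq : p = q
            · simp [hpq, Matrix.one_apply]
            · rw [if_neg (fun h => hpq h.symm), Matrix.one_apply_ne hpq]; simp

/-- the rotation products are unitary -/
lemma rotProd_unitary : ∀ m, m ≤ n - 1 →
    (rotProdFrom0 G m)ᴴ * rotProdFrom0 G m = 1 := by
  intro m
  induction m with
  | zero => simp [rotProd_zero]
  | succ m ih =>
    intro hm
    have hmn : m + 1 < n := by
      rcases Nat.eq_zero_or_pos n with h | h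
      · omega
      · omega
    rw [rotProd_succ, Matrix.conjTranspose_mul, Matrix.mul_assoc,
        ← Matrix.mul_assoc (rotProdFrom0 G m)ᴴ, ih (by omega), Matrix.one_mul,
        givens_unitary hG hmn]

end


/-- Theorem 2.7 of the paper (0-indexed: the paper's `G_1, …, G_{n-1}` are
`G 0, …, G (n-2)`, its row index `i ∈ {3, …, n}` is `r = i - 1 ∈ {2, …, n-1}`,
and its `R G_1 ⋯ G_{i-2}` is `R * (G 0 * ⋯ * G (r-2))`):
the `r`-th row of `R * G 0 * ⋯ * G (r-2)` has its first `r - 1` entries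
equal to zero. -/
theorem stmt_12 (n : ℕ)
    (c : ℕ → ℝ) (s : ℕ → ℂ) (G : ℕ → Matrix (Fin n) (Fin n) ℂ)
    (hG : ∀ i, i + 1 < n → IsGivensAt i (c i) (s i) (G i))
    (hs : ∀ i, i + 1 < n → s i ≠ 0)
    (A : Matrix (Fin n) (Fin n) ℂ) (dD : Fin n → ℝ) :
    let Q := rotProdFrom0 G (n - 1)
    let R := tOp (Q * A * Qᴴ) -
      Q * (Matrix.diagonal (fun i => (dD i : ℂ)) + tOp A) * Qᴴ
    ∀ r : Fin n, 2 ≤ (r : ℕ) → ∀ j : Fin n, (j : ℕ) < (r : ℕ) - 1 →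
      (R * rotProdFrom0 G ((r : ℕ) - 1)) r j = 0 := by
  intro Q R r hr j hj
  have hrn : (r:ℕ) < n := r.isLt
  have hR : R = tOp (Q * A * Qᴴ) -
      Q * (Matrix.diagonal (fun i => (dD i : ℂ)) + tOp A) * Qᴴ := rfl
  set N : Matrix (Fin n) (Fin n) ℂ :=
    A - (Matrix.diagonal (fun i => (dD i : ℂ)) + tOp A) with hN
  set P : Matrix (Fin n) (Fin n) ℂ := rotProdFrom0 G ((r:ℕ)-1) with hP
  -- Step 1: below the diagonal, R agrees with Q N Qᴴ
  have hQN : ∀ k : Fin n, (k:ℕ) < (r:ℕ) → R r k = (Q * N * Qᴴ) r k := by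
    intro k hk
    have h1 : tOp (Q * A * Qᴴ) r k = (Q * A * Qᴴ) r k := by
      simp only [tOp, Matrix.of_apply]
      rw [if_pos (Fin.lt_def.mpr hk)]
    have h2 : Q * N * Qᴴ =
        Q * A * Qᴴ - Q * (Matrix.diagonal (fun i => (dD i : ℂ)) + tOp A) * Qᴴ := by
      rw [hN, Matrix.mul_sub, Matrix.sub_mul]
    rw [hR, h2, Matrix.sub_apply, Matrix.sub_apply, h1]
  -- Step 2
  have hmain : (R * P) r j = ((Q * N * Qᴴ) * P) r j := by
    rw [Matrix.mul_apply, Matrix.mul_apply]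
    refine Finset.sum_congr rfl fun k _ => ?_
    by_cases hk : (k:ℕ) < (r:ℕ)
    · rw [hQN k hk]
    · have hzero : P k j = 0 :=
        rotProd_hess hG ((r:ℕ)-1) (by omega) k j (by omega)
      rw [hzero, mul_zero, mul_zero]
  -- Step 3: column j of Qᴴ P is e_j
  have hQPj : ∀ t : Fin n, (Qᴴ * P) t j = (1 : Matrix (Fin n) (Fin n) ℂ) t j := by
    intro t
    have hcol : ∀ u : Fin n, P u j = Q u j := fun u =>
      (rotProd_col_agree hG ((r:ℕ)-1) (n-1) (by omega) (le_refl _) j hj u).symm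
    rw [Matrix.mul_apply]
    calc ∑ u, Qᴴ t u * P u j = ∑ u, Qᴴ t u * Q u j := by
          refine Finset.sum_congr rfl fun u _ => by rw [hcol u]
      _ = (Qᴴ * Q) t j := (Matrix.mul_apply).symm
      _ = (1 : Matrix (Fin n) (Fin n) ℂ) t j := by
          rw [rotProd_unitary hG (n-1) (le_refl _)]
  rw [hmain, Matrix.mul_assoc, Matrix.mul_apply]
  have hred : ∑ t, (Q*N) r t * (Qᴴ*P) t j = (Q*N) r j := by
    calc ∑ t, (Q*N) r t * (Qᴴ*P) t j
        = ∑ t, (Q*N) r t * (1 : Matrix (Fin n) (Fin n) ℂ) t j :=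
          Finset.sum_congr rfl (fun t _ => by rw [hQPj t])
      _ = (Q * N * (1 : Matrix (Fin n) (Fin n) ℂ)) r j := (Matrix.mul_apply).symm
      _ = (Q*N) r j := by rw [Matrix.mul_one]
  rw [hred, Matrix.mul_apply]
  refine Finset.sum_eq_zero fun k _ => ?_
  by_cases hk : (k:ℕ) ≤ (j:ℕ)
  · have hq0 : Q r k = 0 :=
      rotProd_hess hG (n-1) (by omega) r k (by omega)
    rw [hq0, zero_mul]
  · have hkj : (j:ℕ) < (k:ℕ) := by omega
    have hne : k ≠ j := fun he => by rw [he] at hkj; omega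
    have hNk : N k j = 0 := by
      rw [hN]
      simp only [Matrix.sub_apply, Matrix.add_apply,
        Matrix.diagonal_apply_ne _ hne, tOp, Matrix.of_apply]
      rw [if_pos (Fin.lt_def.mpr hkj)]
      ring
    rw [hNk, mul_zero]
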